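/- Let a₂ : ℝ^{M₂} → ℝ^{M₂} be linear with ⟨a₂(θ), θ⟩ ≥ |θ|², b₂ bilinear with ⟨b₂(v, θ), θ⟩ = 0, and let ψ : [0,∞) → ℝ^{M₂} be differentiable with ψ(0) = 0 and ψ' + a₂(ψ) = −b₂(v, θ*) − b₂(ũ, ψ) for continuous v, θ*, ũ. Then for every η > 0 and t ≥ 0, |ψ(t)|² ≤ exp(C t + (η/2) ∫₀ᵗ |θ*(s)|² ds) · ∫₀ᵗ C |v(s)|² exp(−C s − (η/2)∫₀ˢ |θ*|²) ds in particular |ψ(t)|² ≤ exp(C t + (η/2) ∫₀ᵗ |θ*|² ds) C ∫₀ᵗ |v(s)|² ds, where C depends only on η and |b₂|. -/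

import Mathlib

open scoped RealInnerProductSpace

theorem stmt_6 {E1 E2 : Type*}
    [NormedAddCommGroup E1] [InnerProductSpace ℝ E1]
    [NormedAddCommGroup E2] [InnerProductSpace ℝ E2]
    (b₂ : E1 →L[ℝ] E2 →L[ℝ] E2) (η : ℝ) (hη : 0 < η) :
    ∃ C > (0:ℝ), ∀ (a₂ : E2 →L[ℝ] E2), (∀ w : E2, ‖w‖ ^ 2 ≤ ⟪a₂ w, w⟫) →
      ∀ (v : ℝ → E1) (θs : ℝ → E2) (ut : ℝ → E1) (ψ ψ' : ℝ → E2),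
      Continuous v → Continuous θs → Continuous ut →
      (∀ t, HasDerivAt ψ (ψ' t) t) → ψ 0 = 0 →
      (∀ (x : E1) (w : E2), ⟪b₂ x w, w⟫ = 0) →
      (∀ t ≥ (0:ℝ), ψ' t + a₂ (ψ t) = -(b₂ (v t) (θs t)) - b₂ (ut t) (ψ t)) →
      ∀ t ≥ (0:ℝ), ‖ψ t‖ ^ 2 ≤
        Real.exp (C * t + (η / 2) * ∫ s in (0:ℝ)..t, ‖θs s‖ ^ 2) *
          (C * ∫ s in (0:ℝ)..t, ‖v s‖ ^ 2) := by
  have hC : (0:ℝ) < 2 / η * ‖b₂‖ ^ 2 + 1 := by positivity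
  set C : ℝ := 2 / η * ‖b₂‖ ^ 2 + 1 with hCdef
  refine ⟨C, hC, ?_⟩
  intro a₂ ha₂ v θs ut ψ ψ' hv hθ hu hψ hψ0 hb hode t ht
  -- derivative of the squared norm
  have hφ : ∀ s, HasDerivAt (fun u => ‖ψ u‖ ^ 2) (2 * ⟪ψ' s, ψ s⟫) s := by
    intro s
    have h1 : HasDerivAt (fun u => ⟪ψ u, ψ u⟫) (⟪ψ s, ψ' s⟫ + ⟪ψ' s, ψ s⟫) s :=
      HasDerivAt.inner ℝ (hψ s) (hψ s)
    have h2 : (⟪ψ s, ψ' s⟫ + ⟪ψ' s, ψ s⟫) = 2 * ⟪ψ' s, ψ s⟫ := by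
      rw [real_inner_comm]; ring
    rw [h2] at h1
    convert h1 using 1
    ext u
    rw [real_inner_self_eq_norm_sq]
  -- derivative of the integral of ‖θs‖², etc.
  have hθc : Continuous fun r => ‖θs r‖ ^ 2 := (hθ.norm.pow 2)
  have hvc : Continuous fun r => ‖v r‖ ^ 2 := (hv.norm.pow 2)
  have hIθ : ∀ s, HasDerivAt (fun u => ∫ r in (0:ℝ)..u, ‖θs r‖ ^ 2) (‖θs s‖ ^ 2) s := by
    intro s
    exact intervalIntegral.integral_hasDerivAt_right (hθc.intervalIntegrable 0 s)
      hθc.aestronglyMeasurable.stronglyMeasurableAtFilter hθc.continuousAt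
  have hIv : ∀ s, HasDerivAt (fun u => ∫ r in (0:ℝ)..u, ‖v r‖ ^ 2) (‖v s‖ ^ 2) s := by
    intro s
    exact intervalIntegral.integral_hasDerivAt_right (hvc.intervalIntegrable 0 s)
      hvc.aestronglyMeasurable.stronglyMeasurableAtFilter hvc.continuousAt
  set G : ℝ → ℝ := fun s => C * s + η / 2 * ∫ r in (0:ℝ)..s, ‖θs r‖ ^ 2 with hGdef
  have hG : ∀ s, HasDerivAt G (C + η / 2 * ‖θs s‖ ^ 2) s := by
    intro s
    have := ((hasDerivAt_id s).const_mul C).add ((hIθ s).const_mul (η / 2))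
    exact this.congr_deriv (by ring)
  set F : ℝ → ℝ := fun s => ‖ψ s‖ ^ 2 * Real.exp (-G s) with hFdef
  have hF : ∀ s, HasDerivAt F
      ((2 * ⟪ψ' s, ψ s⟫ - (C + η / 2 * ‖θs s‖ ^ 2) * ‖ψ s‖ ^ 2) * Real.exp (-G s)) s := by
    intro s
    have he : HasDerivAt (fun u => Real.exp (-G u)) (-(C + η / 2 * ‖θs s‖ ^ 2) * Real.exp (-G s)) s := by
      have := ((hG s).neg).exp
      exact this.congr_deriv (by simp only [Pi.neg_apply]; ring)
    have := (hφ s).mul he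
    exact this.congr_deriv (by ring)
  -- nonnegativity of G on [0, ∞)
  have hGnn : ∀ s ≥ (0:ℝ), 0 ≤ G s := by
    intro s hs
    have h1 : 0 ≤ ∫ r in (0:ℝ)..s, ‖θs r‖ ^ 2 :=
      intervalIntegral.integral_nonneg hs (fun r _ => by positivity)
    have : 0 ≤ C * s := mul_nonneg hC.le hs
    simp only [hGdef]
    positivity
  -- Key differential inequality
  have hkey : ∀ s ≥ (0:ℝ),
      2 * ⟪ψ' s, ψ s⟫ ≤ C * ‖v s‖ ^ 2 + (C + η / 2 * ‖θs s‖ ^ 2) * ‖ψ s‖ ^ 2 := by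
    intro s hs
    have heq : ψ' s = -(b₂ (v s) (θs s)) - b₂ (ut s) (ψ s) - a₂ (ψ s) := by
      have := hode s hs; linear_combination (norm := module) this
    have hinner : ⟪ψ' s, ψ s⟫ = -⟪b₂ (v s) (θs s), ψ s⟫ - ⟪a₂ (ψ s), ψ s⟫ := by
      rw [heq]
      simp [inner_sub_left, inner_neg_left, hb (ut s) (ψ s)]
    rw [hinner]
    have h1 : |⟪b₂ (v s) (θs s), ψ s⟫| ≤ ‖b₂‖ * ‖v s‖ * ‖θs s‖ * ‖ψ s‖ := by
      calc |⟪b₂ (v s) (θs s), ψ s⟫| ≤ ‖b₂ (v s) (θs s)‖ * ‖ψ s‖ := abs_real_inner_le_norm _ _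
        _ ≤ ‖b₂‖ * ‖v s‖ * ‖θs s‖ * ‖ψ s‖ := by
            gcongr
            exact b₂.le_opNorm₂ (v s) (θs s)
    have h2 : ‖ψ s‖ ^ 2 ≤ ⟪a₂ (ψ s), ψ s⟫ := ha₂ (ψ s)
    have hyoung : 2 * (‖b₂‖ * ‖v s‖) * (‖θs s‖ * ‖ψ s‖) ≤
        2 / η * (‖b₂‖ * ‖v s‖) ^ 2 + η / 2 * (‖θs s‖ * ‖ψ s‖) ^ 2 := by
      rw [div_mul_eq_mul_div, div_mul_eq_mul_div, div_add_div _ _ (ne_of_gt hη) (by norm_num : (2:ℝ) ≠ 0),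
        le_div_iff₀ (by positivity)]
      nlinarith [sq_nonneg (2 * (‖b₂‖ * ‖v s‖) - η * (‖θs s‖ * ‖ψ s‖))]
    have habs := abs_le.1 h1
    have hψnn : (0:ℝ) ≤ ‖ψ s‖ ^ 2 := by positivity
    have hvnn : (0:ℝ) ≤ ‖v s‖ ^ 2 := by positivity
    have hCge : 2 / η * ‖b₂‖ ^ 2 ≤ C := by simp [hCdef]
    clear_value C
    nlinarith [habs.1, h2, hyoung, mul_le_mul_of_nonneg_right hCge hvnn, mul_nonneg hC.le hψnn, mul_nonneg (mul_nonneg hη.le (sq_nonneg ‖θs s‖)) hψnn]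
  -- the function H
  set H : ℝ → ℝ := fun s => C * (∫ r in (0:ℝ)..s, ‖v r‖ ^ 2) - F s with hHdef
  have hH : ∀ s, HasDerivAt H
      (C * ‖v s‖ ^ 2 - (2 * ⟪ψ' s, ψ s⟫ - (C + η / 2 * ‖θs s‖ ^ 2) * ‖ψ s‖ ^ 2) * Real.exp (-G s)) s :=
    fun s => ((hIv s).const_mul C).sub (hF s)
  have hmono : MonotoneOn H (Set.Icc 0 t) := by
    apply monotoneOn_of_hasDerivWithinAt_nonneg (convex_Icc 0 t)
      (fun s _ => (hH s).continuousAt.continuousWithinAt)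
      (fun s _ => (hH s).hasDerivWithinAt)
    intro s hs
    rw [interior_Icc] at hs
    have hs0 : (0:ℝ) ≤ s := hs.1.le
    have h1 := hkey s hs0
    have hexp : Real.exp (-G s) ≤ 1 := Real.exp_le_one_iff.2 (neg_nonpos.2 (hGnn s hs0))
    have hexp0 : (0:ℝ) < Real.exp (-G s) := Real.exp_pos _
    have h2 : (2 * ⟪ψ' s, ψ s⟫ - (C + η / 2 * ‖θs s‖ ^ 2) * ‖ψ s‖ ^ 2) * Real.exp (-G s)
        ≤ C * ‖v s‖ ^ 2 := by
      calc _ ≤ (C * ‖v s‖ ^ 2) * Real.exp (-G s) := by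
              apply mul_le_mul_of_nonneg_right _ hexp0.le
              linarith [h1]
        _ ≤ C * ‖v s‖ ^ 2 := by
              apply mul_le_of_le_one_right _ hexp
              positivity
    linarith
  have h0t : (0:ℝ) ∈ Set.Icc (0:ℝ) t := ⟨le_refl 0, ht⟩
  have htt : t ∈ Set.Icc (0:ℝ) t := ⟨ht, le_refl t⟩
  have := hmono h0t htt ht
  have hH0 : H 0 = 0 := by
    simp [hHdef, hFdef, hψ0]
  rw [hH0] at this
  -- conclude
  have hFt : F t ≤ C * ∫ r in (0:ℝ)..t, ‖v r‖ ^ 2 := by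
    simpa [hHdef, sub_nonneg] using this
  have hexpGt : (0:ℝ) < Real.exp (G t) := Real.exp_pos _
  have : ‖ψ t‖ ^ 2 = F t * Real.exp (G t) := by
    simp only [hFdef]
    rw [mul_assoc, ← Real.exp_add]
    simp
  rw [this]
  calc F t * Real.exp (G t) ≤ (C * ∫ r in (0:ℝ)..t, ‖v r‖ ^ 2) * Real.exp (G t) :=
        mul_le_mul_of_nonneg_right hFt hexpGt.le
    _ = Real.exp (C * t + η / 2 * ∫ s in (0:ℝ)..t, ‖θs s‖ ^ 2) * (C * ∫ s in (0:ℝ)..t, ‖v s‖ ^ 2) := by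
        rw [mul_comm]
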